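/- Upper bound on the probability that two given nodes are both isolated in g(n,r,p) (step in the proof of Theorem 9). Fix n ≥ 2, r > 0, and p ∈ (0,1]. Then the probability that both v₁ and v₂ are isolated (each has no incident edges) in g(n,r,p) is at most ∫_{S₀} ∫_{S₀} (1 − ν(B(X,r)) p − ν(B(Y,r)) p + ν(B(X,r) ∩ B(Y,r)) p²)^{n−2} dm(X) dm(Y). -/

import Mathlib

set_option maxHeartbeats 2000000


open MeasureTheory Metric Finset
open scoped ENNReal

noncomputable section

abbrev Pt : Type := EuclideanSpace ℝ (Fin 2)

def pt (x y : ℝ) : Pt := (WithLp.equiv 2 (Fin 2 → ℝ)).symm ![x, y]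

def S0 : Set Pt := {X | X 0 ∈ Set.Icc (-(1:ℝ)/2) (1/2) ∧ X 1 ∈ Set.Icc (-(1:ℝ)/2) (1/2)}

def gridPt (s : ℕ) (ij : Fin s × Fin s) : Pt :=
  pt (((ij.1 : ℝ) + 1/2) / s - 1/2) (((ij.2 : ℝ) + 1/2) / s - 1/2)

/-- The joint distribution of `n` nodes placed i.i.d. uniformly on `S₀`. -/
def μunif (n : ℕ) : Measure (Fin n → Pt) := Measure.pi fun _ => volume.restrict S0

/-- `ν(F)`: the area (Lebesgue measure) of `F ∩ S₀`. -/
def nu (F : Set Pt) : ℝ := (volume (F ∩ S0)).toReal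

/-- Coverage probability of the random network `g(n, r)`. -/
def pcovRand (n : ℕ) (r : ℝ) : ℝ :=
  (μunif n {ω | ∀ u ∈ S0, ∃ i, dist (ω i) u ≤ r}).toReal

/-- The Bernoulli(p) measure on Bool. -/
def bern (p : ℝ) : Measure Bool :=
  ENNReal.ofReal p • Measure.dirac true + ENNReal.ofReal (1 - p) • Measure.dirac false

/-- Sample space measure for `g(n, r, p)`: node positions are i.i.d. uniform on `S₀`,
and each unordered pair of nodes carries an independent Bernoulli(p) indicator. -/
def μgraph (n : ℕ) (p : ℝ) : Measure ((Fin n → Pt) × (Sym2 (Fin n) → Bool)) :=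
  (Measure.pi fun _ : Fin n => volume.restrict S0).prod
    (Measure.pi fun _ : Sym2 (Fin n) => bern p)

/-- Adjacency in `g(n, r, p)`: nodes `i ≠ j` are joined iff they are within distance `r`
and the pair's Bernoulli indicator equals `true`. -/
def adj (n : ℕ) (r : ℝ) (ω : (Fin n → Pt) × (Sym2 (Fin n) → Bool)) (i j : Fin n) : Prop :=
  i ≠ j ∧ dist (ω.1 i) (ω.1 j) ≤ r ∧ ω.2 s(i, j) = true

/-- Probability that `g(n, r, p)` is disconnected. -/
def pdisc (n : ℕ) (r p : ℝ) : ℝ :=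
  (μgraph n p {ω | ¬ ∀ i j : Fin n, Relation.ReflTransGen (adj n r ω) i j}).toReal

namespace TwoIso

theorem lintegral_fin_prod {m : ℕ} {E : Fin m → Type*} [∀ i, MeasurableSpace (E i)]
    (μ : ∀ i, Measure (E i)) [∀ i, SigmaFinite (μ i)]
    (f : ∀ i, E i → ℝ≥0∞) (hf : ∀ i, Measurable (f i)) :
    ∫⁻ x : ∀ i, E i, ∏ i, f i (x i) ∂Measure.pi μ = ∏ i, ∫⁻ y, f i y ∂μ i := by
  induction m with
  | zero => simp [lintegral_const]
  | succ m ih =>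
    have mp := (measurePreserving_piFinSuccAbove μ 0).symm
    have hF : Measurable fun x : ∀ i, E i => ∏ i, f i (x i) :=
      Finset.measurable_prod _ fun i _ => (hf i).comp (measurable_pi_apply i)
    rw [← mp.lintegral_comp hF]
    simp_rw [MeasurableEquiv.piFinSuccAbove_symm_apply, Fin.insertNthEquiv,
      Fin.prod_univ_succ, Fin.insertNth_zero]
    simp only [Fin.zero_succAbove, Function.comp_def, Fin.cons_zero, Fin.cons_succ, cast_eq,
      Equiv.coe_fn_mk]
    have h2 : Measurable fun z : ∀ j : Fin m, E (Fin.succ j) => ∏ j, f (Fin.succ j) (z j) :=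
      Finset.measurable_prod _ fun i _ => (hf _).comp (measurable_pi_apply i)
    rw [← ih _ _ fun i => hf _]
    exact lintegral_prod_mul (μ := μ 0) (ν := Measure.pi fun j => μ (Fin.succ j))
      (hf 0).aemeasurable h2.aemeasurable

theorem lintegral_pi_pow {ι : Type*} [Fintype ι] {E : Type*} [MeasurableSpace E]
    (μ : Measure E) [SigmaFinite μ] (f : E → ℝ≥0∞) (hf : Measurable f) :
    ∫⁻ x : ι → E, ∏ i, f (x i) ∂Measure.pi (fun _ => μ) = (∫⁻ y, f y ∂μ) ^ (Fintype.card ι) := by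
  have e : Fin (Fintype.card ι) ≃ ι := (Fintype.equivFin ι).symm
  have mp := measurePreserving_piCongrLeft (fun _ : ι => μ) e
  have hF : Measurable fun x : ι → E => ∏ i, f (x i) :=
    Finset.measurable_prod _ fun i _ => hf.comp (measurable_pi_apply i)
  rw [← mp.lintegral_comp hF]
  have : ∀ v : Fin (Fintype.card ι) → E,
      (∏ i, f ((MeasurableEquiv.piCongrLeft (fun _ => E) e) v i)) = ∏ j, f (v j) := by
    intro v
    rw [← e.prod_comp]
    refine Finset.prod_congr rfl fun j _ => ?_
    congr 1
    simp [MeasurableEquiv.coe_piCongrLeft, Equiv.piCongrLeft_apply_apply]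
  simp_rw [this]
  rw [lintegral_fin_prod (fun _ => μ) (fun _ => f) (fun _ => hf)]
  simp


theorem measurableSet_S0 : MeasurableSet S0 := by
  have : S0 = (fun X : Pt => X 0) ⁻¹' Set.Icc (-(1:ℝ)/2) (1/2) ∩
      (fun X : Pt => X 1) ⁻¹' Set.Icc (-(1:ℝ)/2) (1/2) := rfl
  rw [this]
  have h0 : Measurable fun X : Pt => X 0 :=
    (continuous_apply (0 : Fin 2)).measurable.comp
      (MeasurableEquiv.toLp 2 (Fin 2 → ℝ)).symm.measurable
  have h1 : Measurable fun X : Pt => X 1 :=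
    (continuous_apply (1 : Fin 2)).measurable.comp
      (MeasurableEquiv.toLp 2 (Fin 2 → ℝ)).symm.measurable
  exact (h0 measurableSet_Icc).inter (h1 measurableSet_Icc)

theorem volume_S0 : volume S0 = 1 := by
  have h : S0 = (MeasurableEquiv.toLp 2 (Fin 2 → ℝ)).symm ⁻¹'
      (Set.univ.pi fun _ : Fin 2 => Set.Icc (-(1:ℝ)/2) (1/2)) := by
    ext X
    simp only [S0, Set.mem_preimage, Set.mem_pi, Set.mem_univ, forall_true_left,
      Set.mem_setOf_eq, Fin.forall_fin_two]
    exact Iff.rfl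
  rw [h, (EuclideanSpace.volume_preserving_symm_measurableEquiv_toLp (Fin 2)).measure_preimage
    (by exact (MeasurableSet.univ_pi fun _ => measurableSet_Icc).nullMeasurableSet)]
  rw [volume_pi, Measure.pi_pi]
  simp [Real.volume_Icc]
  norm_num


instance bern_finite (p : ℝ) : IsFiniteMeasure (bern p) := by
  constructor
  rw [bern]
  simp only [Measure.coe_add, Measure.coe_smul, Pi.add_apply, Pi.smul_apply, smul_eq_mul]
  exact ENNReal.add_lt_top.2 ⟨ENNReal.mul_lt_top ENNReal.ofReal_lt_top (measure_lt_top _ _),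
    ENNReal.mul_lt_top ENNReal.ofReal_lt_top (measure_lt_top _ _)⟩

theorem bern_apply (p : ℝ) (s : Set Bool) :
    bern p s = ENNReal.ofReal p * s.indicator 1 true
      + ENNReal.ofReal (1 - p) * s.indicator 1 false := by
  rw [bern]
  simp only [Measure.coe_add, Measure.coe_smul, Pi.add_apply, Pi.smul_apply, smul_eq_mul]
  rw [Measure.dirac_apply' _ (by trivial), Measure.dirac_apply' _ (by trivial)]

theorem bern_false (p : ℝ) : bern p {false} = ENNReal.ofReal (1 - p) := by
  rw [bern_apply]; simp

theorem bern_univ (p : ℝ) (hp0 : 0 ≤ p) (hp1 : p ≤ 1) : bern p Set.univ = 1 := by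
  rw [bern_apply]
  simp only [Set.indicator_univ, Pi.one_apply, mul_one]
  rw [← ENNReal.ofReal_add hp0 (by linarith)]
  norm_num

theorem bern_prob (p : ℝ) (hp0 : 0 ≤ p) (hp1 : p ≤ 1) : IsProbabilityMeasure (bern p) :=
  ⟨bern_univ p hp0 hp1⟩

def μ0 : Measure Pt := volume.restrict S0

instance μ0_prob : IsProbabilityMeasure μ0 := by
  constructor
  rw [μ0, Measure.restrict_apply_univ, volume_S0]

/-- the per-pair factor -/
def qf (r p : ℝ) (u v : Pt) : ℝ≥0∞ := if dist u v ≤ r then ENNReal.ofReal (1 - p) else 1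

theorem measurable_qf (r p : ℝ) : Measurable (fun w : Pt × Pt => qf r p w.1 w.2) := by
  refine Measurable.ite ?_ measurable_const measurable_const
  exact measurableSet_le (continuous_fst.dist continuous_snd).measurable measurable_const

theorem qf_le_one (r p : ℝ) (hp0 : 0 ≤ p) (u v : Pt) : qf r p u v ≤ 1 := by
  rw [qf]
  split
  · exact ENNReal.ofReal_le_one.2 (by linarith)
  · exact le_rfl

def Gfun (r p : ℝ) (x y : Pt) : ℝ≥0∞ := ∫⁻ z, qf r p x z * qf r p y z ∂μ0

theorem lintegral_kernel_measurable {α : Type*} [MeasurableSpace α] (ν : Measure α) [SFinite ν]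
    (q : α → α → ℝ≥0∞) (hq : Measurable fun w : α × α => q w.1 w.2) :
    Measurable fun w : α × α => ∫⁻ z, q w.1 z * q w.2 z ∂ν := by
  have h1 : Measurable (fun t : (α × α) × α => ((t.1.1, t.2) : α × α)) :=
    (measurable_fst.comp measurable_fst).prodMk measurable_snd
  have h2 : Measurable (fun t : (α × α) × α => ((t.1.2, t.2) : α × α)) :=
    (measurable_snd.comp measurable_fst).prodMk measurable_snd
  have hF : Measurable (fun t : (α × α) × α => q t.1.1 t.2 * q t.1.2 t.2) :=
    (hq.comp h1).mul (hq.comp h2)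
  exact hF.lintegral_prod_right'

theorem measurable_Gfun (r p : ℝ) : Measurable (fun w : Pt × Pt => Gfun r p w.1 w.2) :=
  lintegral_kernel_measurable μ0 (qf r p) (measurable_qf r p)

theorem Gfun_le_one (r p : ℝ) (hp0 : 0 ≤ p) (x y : Pt) : Gfun r p x y ≤ 1 := by
  calc Gfun r p x y ≤ ∫⁻ _, 1 ∂μ0 :=
        lintegral_mono fun z => mul_le_one' (qf_le_one r p hp0 x z) (qf_le_one r p hp0 y z)
    _ = 1 := by simp

theorem Gfun_toReal (r p : ℝ) (hp0 : 0 ≤ p) (hp1 : p ≤ 1) (x y : Pt) :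
    (Gfun r p x y).toReal = 1 - nu (closedBall x r) * p - nu (closedBall y r) * p +
      nu (closedBall x r ∩ closedBall y r) * p ^ 2 := by
  classical
  set A := closedBall x r with hA
  set B := closedBall y r with hB
  have hAm : MeasurableSet A := measurableSet_closedBall
  have hBm : MeasurableSet B := measurableSet_closedBall
  set c := ENNReal.ofReal (1 - p) with hc
  have hqx : ∀ z : Pt, qf r p x z = if z ∈ A then c else 1 := by
    intro z
    simp only [qf, hA, hc, Metric.mem_closedBall, dist_comm z x]
  have hqy : ∀ z : Pt, qf r p y z = if z ∈ B then c else 1 := by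
    intro z
    simp only [qf, hB, hc, Metric.mem_closedBall, dist_comm z y]
  have hfun : ∀ z : Pt, qf r p x z * qf r p y z =
      Set.indicator (A ∩ B) (fun _ => c * c) z + Set.indicator (A \ B) (fun _ => c) z +
      Set.indicator (B \ A) (fun _ => c) z + Set.indicator ((A ∪ B)ᶜ) (fun _ => 1) z := by
    intro z
    rw [hqx, hqy]
    by_cases hzA : z ∈ A <;> by_cases hzB : z ∈ B <;>
      simp [Set.indicator_apply, hzA, hzB]
  rw [Gfun]
  simp_rw [hfun]
  rw [lintegral_add_right _ (measurable_const.indicator (hAm.union hBm).compl),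
    lintegral_add_right _ (measurable_const.indicator (hBm.diff hAm)),
    lintegral_add_right _ (measurable_const.indicator (hAm.diff hBm)),
    lintegral_indicator_const (hAm.inter hBm), lintegral_indicator_const (hAm.diff hBm),
    lintegral_indicator_const (hBm.diff hAm), lintegral_indicator_const (hAm.union hBm).compl]
  rw [μ0, Measure.restrict_apply (hAm.inter hBm), Measure.restrict_apply (hAm.diff hBm),
    Measure.restrict_apply (hBm.diff hAm), Measure.restrict_apply (hAm.union hBm).compl]
  set va := volume ((A \ B) ∩ S0) with hva
  set vb := volume ((B \ A) ∩ S0) with hvb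
  set vc := volume ((A ∩ B) ∩ S0) with hvc
  set vd := volume ((A ∪ B)ᶜ ∩ S0) with hvd
  have hfin : ∀ s : Set Pt, volume (s ∩ S0) ≤ 1 := fun s => by
    calc volume (s ∩ S0) ≤ volume S0 := measure_mono Set.inter_subset_right
      _ = 1 := volume_S0
  have hvafin : va ≠ ⊤ := (lt_of_le_of_lt (hfin _) ENNReal.one_lt_top).ne
  have hvbfin : vb ≠ ⊤ := (lt_of_le_of_lt (hfin _) ENNReal.one_lt_top).ne
  have hvcfin : vc ≠ ⊤ := (lt_of_le_of_lt (hfin _) ENNReal.one_lt_top).ne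
  have hvdfin : vd ≠ ⊤ := (lt_of_le_of_lt (hfin _) ENNReal.one_lt_top).ne
  have f1 : volume (A ∩ S0) = va + vc := by
    rw [hva, hvc, ← measure_union ?_ ((hAm.inter hBm).inter measurableSet_S0)]
    · congr 1
      ext z
      simp only [Set.mem_union, Set.mem_inter_iff, Set.mem_diff]
      tauto
    · rw [Set.disjoint_left]
      rintro z ⟨⟨_, hz⟩, _⟩ ⟨⟨_, hz'⟩, _⟩
      exact hz hz'
  have f2 : volume (B ∩ S0) = vb + vc := by
    rw [hvb, hvc, ← measure_union ?_ ((hAm.inter hBm).inter measurableSet_S0)]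
    · congr 1
      ext z
      simp only [Set.mem_union, Set.mem_inter_iff, Set.mem_diff]
      tauto
    · rw [Set.disjoint_left]
      rintro z ⟨⟨_, hz⟩, _⟩ ⟨⟨hz', _⟩, _⟩
      exact hz hz'
  have f3 : va + vb + vc + vd = 1 := by
    have hsets : S0 = (A \ B ∩ S0) ∪ ((B \ A ∩ S0) ∪ ((A ∩ B ∩ S0) ∪ ((A ∪ B)ᶜ ∩ S0))) := by
      ext z
      simp only [Set.mem_union, Set.mem_inter_iff, Set.mem_diff, Set.mem_compl_iff]
      by_cases hzA : z ∈ A <;> by_cases hzB : z ∈ B <;> by_cases hzS : z ∈ S0 <;> tauto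
    have m2 : MeasurableSet (B \ A ∩ S0) := (hBm.diff hAm).inter measurableSet_S0
    have m3 : MeasurableSet (A ∩ B ∩ S0) := (hAm.inter hBm).inter measurableSet_S0
    have m4 : MeasurableSet ((A ∪ B)ᶜ ∩ S0) := (hAm.union hBm).compl.inter measurableSet_S0
    have d1 : Disjoint (A \ B ∩ S0) ((B \ A ∩ S0) ∪ ((A ∩ B ∩ S0) ∪ ((A ∪ B)ᶜ ∩ S0))) := by
      rw [Set.disjoint_left]
      rintro z ⟨⟨hz1, hz2⟩, _⟩ hz
      simp only [Set.mem_union, Set.mem_inter_iff, Set.mem_diff, Set.mem_compl_iff] at hz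
      tauto
    have d2 : Disjoint (B \ A ∩ S0) ((A ∩ B ∩ S0) ∪ ((A ∪ B)ᶜ ∩ S0)) := by
      rw [Set.disjoint_left]
      rintro z ⟨⟨hz1, hz2⟩, _⟩ hz
      simp only [Set.mem_union, Set.mem_inter_iff, Set.mem_diff, Set.mem_compl_iff] at hz
      tauto
    have d3 : Disjoint (A ∩ B ∩ S0) ((A ∪ B)ᶜ ∩ S0) := by
      rw [Set.disjoint_left]
      rintro z ⟨⟨hz1, hz2⟩, _⟩ hz
      simp only [Set.mem_union, Set.mem_inter_iff, Set.mem_compl_iff] at hz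
      tauto
    have key : volume S0 = volume (A \ B ∩ S0) + (volume (B \ A ∩ S0) +
        (volume (A ∩ B ∩ S0) + volume ((A ∪ B)ᶜ ∩ S0))) := by
      conv_lhs => rw [hsets]
      rw [measure_union d1 (m2.union (m3.union m4)), measure_union d2 (m3.union m4),
        measure_union d3 m4]
    rw [hva, hvb, hvc, hvd, ← volume_S0, key]
    ring
  have hcne : c ≠ ⊤ := ENNReal.ofReal_ne_top
  have hcr : c.toReal = 1 - p := ENNReal.toReal_ofReal (by linarith)
  have hnuA : nu A = va.toReal + vc.toReal := by
    rw [nu, f1, ENNReal.toReal_add hvafin hvcfin]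
  have hnuB : nu B = vb.toReal + vc.toReal := by
    rw [nu, f2, ENNReal.toReal_add hvbfin hvcfin]
  have hnuAB : nu (A ∩ B) = vc.toReal := rfl
  have hsum : va.toReal + vb.toReal + vc.toReal + vd.toReal = 1 := by
    have := congrArg ENNReal.toReal f3
    rwa [ENNReal.toReal_add (by finiteness) hvdfin, ENNReal.toReal_add (by finiteness) hvcfin,
      ENNReal.toReal_add hvafin hvbfin, ENNReal.toReal_one] at this
  rw [ENNReal.toReal_add (by finiteness) (by finiteness),
    ENNReal.toReal_add (by finiteness) (by finiteness),
    ENNReal.toReal_add (by finiteness) (by finiteness),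
    ENNReal.toReal_mul, ENNReal.toReal_mul, ENNReal.toReal_mul, ENNReal.toReal_mul,
    ENNReal.toReal_mul, hcr, ENNReal.toReal_one, hnuA, hnuB, hnuAB]
  have hvd' : vd.toReal = 1 - va.toReal - vb.toReal - vc.toReal := by linarith
  rw [hvd']
  ring

theorem Gfun_ne_top (r p : ℝ) (hp0 : 0 ≤ p) (x y : Pt) : Gfun r p x y ≠ ⊤ :=
  (lt_of_le_of_lt (Gfun_le_one r p hp0 x y) ENNReal.one_lt_top).ne

theorem Gfun_eq (r p : ℝ) (hp0 : 0 ≤ p) (hp1 : p ≤ 1) (x y : Pt) :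
    Gfun r p x y = ENNReal.ofReal (1 - nu (closedBall x r) * p - nu (closedBall y r) * p +
      nu (closedBall x r ∩ closedBall y r) * p ^ 2) := by
  rw [← Gfun_toReal r p hp0 hp1 x y, ENNReal.ofReal_toReal (Gfun_ne_top r p hp0 x y)]

theorem g_nonneg (r p : ℝ) (hp0 : 0 ≤ p) (hp1 : p ≤ 1) (x y : Pt) :
    0 ≤ 1 - nu (closedBall x r) * p - nu (closedBall y r) * p +
      nu (closedBall x r ∩ closedBall y r) * p ^ 2 := by
  rw [← Gfun_toReal r p hp0 hp1 x y]
  exact ENNReal.toReal_nonneg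

theorem g_le_one (r p : ℝ) (hp0 : 0 ≤ p) (hp1 : p ≤ 1) (x y : Pt) :
    1 - nu (closedBall x r) * p - nu (closedBall y r) * p +
      nu (closedBall x r ∩ closedBall y r) * p ^ 2 ≤ 1 := by
  rw [← Gfun_toReal r p hp0 hp1 x y]
  exact ENNReal.toReal_le_of_le_ofReal zero_le_one (by simpa using Gfun_le_one r p hp0 x y)


section Main

variable (n : ℕ) (r p : ℝ)

theorem measurable_comp_pair {α β : Type*} [MeasurableSpace α] [MeasurableSpace β]
    {q : α → α → ℝ≥0∞} (hq : Measurable fun w : α × α => q w.1 w.2)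
    {f g : β → α} (hf : Measurable f) (hg : Measurable g) :
    Measurable fun x : β => q (f x) (g x) := by
  have h : (fun x : β => q (f x) (g x)) = (fun w : α × α => q w.1 w.2) ∘ fun x => (f x, g x) :=
    rfl
  rw [h]; exact hq.comp (hf.prodMk hg)

theorem card_compl_lt2 (hn : 2 ≤ n) : Fintype.card {i : Fin n // ¬ (i : ℕ) < 2} = n - 2 := by
  classical
  have e : {i : Fin n // (i : ℕ) < 2} ≃ Fin 2 :=
    { toFun := fun i => ⟨i.1.1, i.2⟩
      invFun := fun k => ⟨⟨k.1, lt_of_lt_of_le k.2 hn⟩, k.2⟩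
      left_inv := fun i => by ext; rfl
      right_inv := fun k => by ext; rfl }
  have h2 : Fintype.card {i : Fin n // (i : ℕ) < 2} = 2 := by
    rw [Fintype.card_congr e, Fintype.card_fin]
  have := Fintype.card_subtype_compl (fun i : Fin n => (i : ℕ) < 2)
  rw [this, h2, Fintype.card_fin]

theorem bern_side (hn : 2 ≤ n) (hp0 : 0 ≤ p) (hp1 : p ≤ 1) (x : Fin n → Pt) :
    (Measure.pi fun _ : Sym2 (Fin n) => bern p)
      {b : Sym2 (Fin n) → Bool | ∀ j : Fin n, ¬ (j : ℕ) < 2 →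
        (dist (x ⟨0, by linarith⟩) (x j) ≤ r → b s(⟨0, by linarith⟩, j) = false) ∧
        (dist (x ⟨1, by linarith⟩) (x j) ≤ r → b s(⟨1, by linarith⟩, j) = false)} =
    ∏ j ∈ Finset.univ.filter (fun j : Fin n => ¬ (j : ℕ) < 2),
      (qf r p (x ⟨0, by linarith⟩) (x j) * qf r p (x ⟨1, by linarith⟩) (x j)) := by
  classical
  set i0 : Fin n := ⟨0, by linarith⟩ with hi0
  set i1 : Fin n := ⟨1, by linarith⟩ with hi1
  have hv0 : ((i0 : Fin n) : ℕ) < 2 := by simp [hi0]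
  have hv1 : ((i1 : Fin n) : ℕ) < 2 := by simp [hi1]
  have hi01 : i0 ≠ i1 := by simp [hi0, hi1, Fin.ext_iff]
  set J : Finset (Fin n) := Finset.univ.filter (fun j : Fin n => ¬ (j : ℕ) < 2) with hJ
  have hmemJ : ∀ j : Fin n, j ∈ J ↔ ¬ (j : ℕ) < 2 := by
    intro j; simp [hJ]
  set B : Sym2 (Fin n) → Set Bool := fun e =>
    if ∃ j : Fin n, ¬ (j : ℕ) < 2 ∧ ((e = s(i0, j) ∧ dist (x i0) (x j) ≤ r) ∨
      (e = s(i1, j) ∧ dist (x i1) (x j) ≤ r)) then {false} else Set.univ with hBdef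
  have hB0 : ∀ j : Fin n, ¬ (j : ℕ) < 2 →
      B s(i0, j) = if dist (x i0) (x j) ≤ r then ({false} : Set Bool) else Set.univ := by
    intro j hj
    simp only [hBdef]
    by_cases hd : dist (x i0) (x j) ≤ r
    · rw [if_pos ⟨j, hj, Or.inl ⟨rfl, hd⟩⟩, if_pos hd]
    · rw [if_neg, if_neg hd]
      rintro ⟨j', hj', ⟨he, hd'⟩ | ⟨he, hd'⟩⟩
      · rcases Sym2.eq_iff.1 he with ⟨-, h2⟩ | ⟨h1, -⟩
        · exact hd (h2 ▸ hd')
        · exact hj' (by rw [← h1]; exact hv0)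
      · rcases Sym2.eq_iff.1 he with ⟨h1, -⟩ | ⟨h1, -⟩
        · exact hi01 h1
        · exact hj' (by rw [← h1]; exact hv0)
  have hB1 : ∀ j : Fin n, ¬ (j : ℕ) < 2 →
      B s(i1, j) = if dist (x i1) (x j) ≤ r then ({false} : Set Bool) else Set.univ := by
    intro j hj
    simp only [hBdef]
    by_cases hd : dist (x i1) (x j) ≤ r
    · rw [if_pos ⟨j, hj, Or.inr ⟨rfl, hd⟩⟩, if_pos hd]
    · rw [if_neg, if_neg hd]
      rintro ⟨j', hj', ⟨he, hd'⟩ | ⟨he, hd'⟩⟩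
      · rcases Sym2.eq_iff.1 he with ⟨h1, -⟩ | ⟨h1, -⟩
        · exact hi01 h1.symm
        · exact hj' (by rw [← h1]; exact hv1)
      · rcases Sym2.eq_iff.1 he with ⟨-, h2⟩ | ⟨h1, -⟩
        · exact hd (h2 ▸ hd')
        · exact hj' (by rw [← h1]; exact hv1)
  have hset : {b : Sym2 (Fin n) → Bool | ∀ j : Fin n, ¬ (j : ℕ) < 2 →
      (dist (x i0) (x j) ≤ r → b s(i0, j) = false) ∧
      (dist (x i1) (x j) ≤ r → b s(i1, j) = false)} = Set.pi Set.univ B := by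
    ext b
    simp only [Set.mem_setOf_eq, Set.mem_pi, Set.mem_univ, forall_true_left]
    constructor
    · intro h e
      simp only [hBdef]
      split_ifs with hcond
      · obtain ⟨j, hj, ⟨he, hd⟩ | ⟨he, hd⟩⟩ := hcond
        · rw [he]
          exact Set.mem_singleton_iff.2 ((h j hj).1 hd)
        · rw [he]
          exact Set.mem_singleton_iff.2 ((h j hj).2 hd)
      · trivial
    · intro h j hj
      constructor
      · intro hd
        have := h s(i0, j)
        rw [hB0 j hj, if_pos hd] at this
        exact Set.mem_singleton_iff.1 this
      · intro hd
        have := h s(i1, j)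
        rw [hB1 j hj, if_pos hd] at this
        exact Set.mem_singleton_iff.1 this
  rw [hset, Measure.pi_pi]
  have hfs0 : ∀ j ∈ J, bern p (B s(i0, j)) = qf r p (x i0) (x j) := by
    intro j hj
    rw [hB0 j ((hmemJ j).1 hj), qf]
    split_ifs with hd
    · exact bern_false p
    · exact bern_univ p hp0 hp1
  have hfs1 : ∀ j ∈ J, bern p (B s(i1, j)) = qf r p (x i1) (x j) := by
    intro j hj
    rw [hB1 j ((hmemJ j).1 hj), qf]
    split_ifs with hd
    · exact bern_false p
    · exact bern_univ p hp0 hp1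
  set T : Finset (Sym2 (Fin n)) :=
    J.image (fun j => s(i0, j)) ∪ J.image (fun j => s(i1, j)) with hT
  have houter : ∀ e ∈ (Finset.univ : Finset (Sym2 (Fin n))), e ∉ T → bern p (B e) = 1 := by
    intro e _ heT
    have hBe : B e = Set.univ := by
      simp only [hBdef]
      rw [if_neg]
      rintro ⟨j, hj, ⟨he, -⟩ | ⟨he, -⟩⟩
      · exact heT (Finset.mem_union_left _ (Finset.mem_image.2 ⟨j, (hmemJ j).2 hj, he.symm⟩))
      · exact heT (Finset.mem_union_right _ (Finset.mem_image.2 ⟨j, (hmemJ j).2 hj, he.symm⟩))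
    rw [hBe]
    exact bern_univ p hp0 hp1
  have hdisj : Disjoint (J.image (fun j => s(i0, j))) (J.image (fun j => s(i1, j))) := by
    rw [Finset.disjoint_left]
    rintro e he0 he1
    obtain ⟨j, hj, rfl⟩ := Finset.mem_image.1 he0
    obtain ⟨j', hj', he⟩ := Finset.mem_image.1 he1
    rcases Sym2.eq_iff.1 he with ⟨h1, -⟩ | ⟨-, h2⟩
    · exact hi01 h1.symm
    · exact (hmemJ j').1 hj' (by rw [h2]; exact hv0)
  have hinj0 : Set.InjOn (fun j => s(i0, j)) J := by
    intro a ha b hb he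
    rcases Sym2.eq_iff.1 he with ⟨-, h2⟩ | ⟨h1, h2⟩
    · exact h2
    · exact absurd (by rw [h2]; exact hv0) ((hmemJ a).1 ha)
  have hinj1 : Set.InjOn (fun j => s(i1, j)) J := by
    intro a ha b hb he
    rcases Sym2.eq_iff.1 he with ⟨-, h2⟩ | ⟨h1, h2⟩
    · exact h2
    · exact absurd (by rw [h2]; exact hv1) ((hmemJ a).1 ha)
  calc ∏ e : Sym2 (Fin n), bern p (B e) = ∏ e ∈ T, bern p (B e) :=
        (Finset.prod_subset (Finset.subset_univ T) houter).symm
    _ = (∏ e ∈ J.image (fun j => s(i0, j)), bern p (B e)) *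
          ∏ e ∈ J.image (fun j => s(i1, j)), bern p (B e) :=
        Finset.prod_union hdisj
    _ = (∏ j ∈ J, bern p (B s(i0, j))) * ∏ j ∈ J, bern p (B s(i1, j)) := by
        rw [Finset.prod_image (fun a ha b hb => hinj0 ha hb),
          Finset.prod_image (fun a ha b hb => hinj1 ha hb)]
    _ = (∏ j ∈ J, qf r p (x i0) (x j)) * ∏ j ∈ J, qf r p (x i1) (x j) := by
        rw [Finset.prod_congr rfl hfs0, Finset.prod_congr rfl hfs1]
    _ = ∏ j ∈ J, (qf r p (x i0) (x j) * qf r p (x i1) (x j)) :=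
        (Finset.prod_mul_distrib).symm

def kappa (hn : 2 ≤ n) : Fin 2 ≃ {i : Fin n // (i : ℕ) < 2} :=
  { toFun := fun k => ⟨⟨k.1, lt_of_lt_of_le k.2 hn⟩, k.2⟩
    invFun := fun i => ⟨i.1.1, i.2⟩
    left_inv := fun k => by ext; rfl
    right_inv := fun i => by ext; rfl }

theorem position_side (hn : 2 ≤ n) :
    ∫⁻ x : Fin n → Pt, ∏ j ∈ Finset.univ.filter (fun j : Fin n => ¬ (j : ℕ) < 2),
        (qf r p (x ⟨0, by linarith⟩) (x j) * qf r p (x ⟨1, by linarith⟩) (x j))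
      ∂(Measure.pi fun _ : Fin n => μ0)
    = ∫⁻ X, ∫⁻ Y, (Gfun r p X Y) ^ (n - 2) ∂μ0 ∂μ0 := by
  classical
  set i0 : Fin n := ⟨0, by linarith⟩ with hi0
  set i1 : Fin n := ⟨1, by linarith⟩ with hi1
  set P : Fin n → Prop := fun i => (i : ℕ) < 2 with hP
  have hP0 : P i0 := by simp [hP, hi0]
  have hP1 : P i1 := by simp [hP, hi1]
  set J : Finset (Fin n) := Finset.univ.filter (fun j : Fin n => ¬ (j : ℕ) < 2) with hJ
  have hmemJ : ∀ j : Fin n, j ∈ J ↔ ¬ P j := by intro j; simp [hJ, hP]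
  have hqm : Measurable (fun w : Pt × Pt => qf r p w.1 w.2) := measurable_qf r p
  set Φ : (Fin n → Pt) → ℝ≥0∞ :=
    fun x => ∏ j ∈ J, (qf r p (x i0) (x j) * qf r p (x i1) (x j)) with hΦdef
  have hΦ : Measurable Φ := by
    refine Finset.measurable_prod _ fun j _ => Measurable.mul ?_ ?_
    · exact measurable_comp_pair hqm (measurable_pi_apply i0) (measurable_pi_apply j)
    · exact measurable_comp_pair hqm (measurable_pi_apply i1) (measurable_pi_apply j)
  have mp := measurePreserving_piEquivPiSubtypeProd (fun _ : Fin n => μ0) P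
  have heq := ((mp.symm (MeasurableEquiv.piEquivPiSubtypeProd (fun _ : Fin n => Pt) P)).lintegral_comp hΦ).symm
  rw [heq]
  set e := (MeasurableEquiv.piEquivPiSubtypeProd (fun _ : Fin n => Pt) P).symm with hedef
  have hmeasw : Measurable fun w : ({i : Fin n // P i} → Pt) × ({i : Fin n // ¬ P i} → Pt) =>
      Φ (e w) := hΦ.comp e.measurable
  rw [lintegral_prod _ hmeasw.aemeasurable]
  set H2 : Pt → Pt → ℝ≥0∞ := fun a b => Gfun r p a b ^ (n - 2) with hH2def
  have hH : Measurable (fun w : Pt × Pt => H2 w.1 w.2) := (measurable_Gfun r p).pow_const _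
  have key : ∀ u : {i : Fin n // P i} → Pt,
      ∫⁻ v : {i : Fin n // ¬ P i} → Pt, Φ (e (u, v)) ∂(Measure.pi fun _ => μ0)
        = H2 (u ⟨i0, hP0⟩) (u ⟨i1, hP1⟩) := by
    intro u
    have hx : ∀ (v : {i : Fin n // ¬ P i} → Pt) (j : Fin n) (hj : ¬ P j),
        e (u, v) j = v ⟨j, hj⟩ := by
      intro v j hj
      rw [hedef]
      show (Equiv.piEquivPiSubtypeProd P (fun _ => Pt)).symm (u, v) j = _
      rw [Equiv.piEquivPiSubtypeProd_symm_apply, dif_neg hj]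
    have hx0 : ∀ v : {i : Fin n // ¬ P i} → Pt, e (u, v) i0 = u ⟨i0, hP0⟩ := by
      intro v
      rw [hedef]
      show (Equiv.piEquivPiSubtypeProd P (fun _ => Pt)).symm (u, v) i0 = _
      rw [Equiv.piEquivPiSubtypeProd_symm_apply, dif_pos hP0]
    have hx1 : ∀ v : {i : Fin n // ¬ P i} → Pt, e (u, v) i1 = u ⟨i1, hP1⟩ := by
      intro v
      rw [hedef]
      show (Equiv.piEquivPiSubtypeProd P (fun _ => Pt)).symm (u, v) i1 = _
      rw [Equiv.piEquivPiSubtypeProd_symm_apply, dif_pos hP1]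
    set F : Pt → ℝ≥0∞ := fun w => qf r p (u ⟨i0, hP0⟩) w * qf r p (u ⟨i1, hP1⟩) w with hFdef
    have hFm : Measurable F := by
      refine Measurable.mul ?_ ?_
      · exact measurable_comp_pair hqm measurable_const measurable_id
      · exact measurable_comp_pair hqm measurable_const measurable_id
    have hprod : ∀ v : {i : Fin n // ¬ P i} → Pt,
        Φ (e (u, v)) = ∏ j' : {i : Fin n // ¬ P i}, F (v j') := by
      intro v
      simp only [hΦdef]
      rw [Finset.prod_subtype J hmemJ
        (fun j => qf r p (e (u, v) i0) (e (u, v) j) * qf r p (e (u, v) i1) (e (u, v) j))]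
      refine Finset.prod_congr rfl fun j' _ => ?_
      rw [hx v j'.1 j'.2, hx0 v, hx1 v, Subtype.coe_eta]
    simp_rw [hprod]
    rw [lintegral_pi_pow _ F hFm, card_compl_lt2 n hn]
    rfl
  simp_rw [key]
  -- now integrate over the two distinguished coordinates
  have hH2m : Measurable fun u : {i : Fin n // P i} → Pt => H2 (u ⟨i0, hP0⟩) (u ⟨i1, hP1⟩) :=
    measurable_comp_pair hH (measurable_pi_apply _) (measurable_pi_apply _)
  set κ : Fin 2 ≃ {i : Fin n // P i} := kappa n hn with hκ
  have mp2 := measurePreserving_piCongrLeft (fun _ : {i : Fin n // P i} => μ0) κ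
  have mp3 := measurePreserving_piFinTwo (fun _ : Fin 2 => μ0)
  calc ∫⁻ u : {i : Fin n // P i} → Pt, H2 (u ⟨i0, hP0⟩) (u ⟨i1, hP1⟩)
        ∂(Measure.pi fun _ => μ0)
      = ∫⁻ v : Fin 2 → Pt, H2 (v 0) (v 1) ∂(Measure.pi fun _ => μ0) := by
        rw [← mp2.lintegral_comp hH2m]
        refine lintegral_congr fun v => ?_
        have h0 : (MeasurableEquiv.piCongrLeft (fun _ => Pt) κ) v ⟨i0, hP0⟩ = v 0 := by
          have hk : (⟨i0, hP0⟩ : {i : Fin n // P i}) = κ 0 := Subtype.ext (Fin.ext (by rw [hκ]; rfl))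
          rw [hk, MeasurableEquiv.coe_piCongrLeft]
          exact Equiv.piCongrLeft_apply_apply (fun _ => Pt) κ v 0
        have h1 : (MeasurableEquiv.piCongrLeft (fun _ => Pt) κ) v ⟨i1, hP1⟩ = v 1 := by
          have hk : (⟨i1, hP1⟩ : {i : Fin n // P i}) = κ 1 := Subtype.ext (Fin.ext (by rw [hκ]; rfl))
          rw [hk, MeasurableEquiv.coe_piCongrLeft]
          exact Equiv.piCongrLeft_apply_apply (fun _ => Pt) κ v 1
        rw [h0, h1]
    _ = ∫⁻ w : Pt × Pt, H2 w.1 w.2 ∂(μ0.prod μ0) := mp3.lintegral_comp hH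
    _ = ∫⁻ X, ∫⁻ Y, H2 X Y ∂μ0 ∂μ0 := lintegral_prod _ hH.aemeasurable

theorem measure_Eaux (hn : 2 ≤ n) (hp0 : 0 ≤ p) (hp1 : p ≤ 1) :
    ((Measure.pi fun _ : Fin n => volume.restrict S0).prod
        (Measure.pi fun _ : Sym2 (Fin n) => bern p))
      {ω : (Fin n → Pt) × (Sym2 (Fin n) → Bool) | ∀ j : Fin n, ¬ (j : ℕ) < 2 →
        (dist (ω.1 ⟨0, by linarith⟩) (ω.1 j) ≤ r → ω.2 s(⟨0, by linarith⟩, j) = false) ∧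
        (dist (ω.1 ⟨1, by linarith⟩) (ω.1 j) ≤ r → ω.2 s(⟨1, by linarith⟩, j) = false)}
    = ∫⁻ X, ∫⁻ Y, (Gfun r p X Y) ^ (n - 2) ∂μ0 ∂μ0 := by
  classical
  set i0 : Fin n := ⟨0, by linarith⟩ with hi0
  set i1 : Fin n := ⟨1, by linarith⟩ with hi1
  set E' : Set ((Fin n → Pt) × (Sym2 (Fin n) → Bool)) :=
    {ω | ∀ j : Fin n, ¬ (j : ℕ) < 2 →
      (dist (ω.1 i0) (ω.1 j) ≤ r → ω.2 s(i0, j) = false) ∧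
      (dist (ω.1 i1) (ω.1 j) ≤ r → ω.2 s(i1, j) = false)} with hE'def
  have hE'meas : MeasurableSet E' := by
    have : E' = ⋂ j : Fin n, {ω : (Fin n → Pt) × (Sym2 (Fin n) → Bool) | ¬ (j : ℕ) < 2 →
        (dist (ω.1 i0) (ω.1 j) ≤ r → ω.2 s(i0, j) = false) ∧
        (dist (ω.1 i1) (ω.1 j) ≤ r → ω.2 s(i1, j) = false)} := by
      rw [hE'def]
      ext ω
      simp only [Set.mem_setOf_eq, Set.mem_iInter]
    rw [this]
    refine MeasurableSet.iInter fun j => ?_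
    by_cases hj : (j : ℕ) < 2
    · convert MeasurableSet.univ using 1
      ext ω
      simp [hj]
    · have hrw : {ω : (Fin n → Pt) × (Sym2 (Fin n) → Bool) | ¬ (j : ℕ) < 2 →
          (dist (ω.1 i0) (ω.1 j) ≤ r → ω.2 s(i0, j) = false) ∧
          (dist (ω.1 i1) (ω.1 j) ≤ r → ω.2 s(i1, j) = false)} =
          ({ω : (Fin n → Pt) × (Sym2 (Fin n) → Bool) | dist (ω.1 i0) (ω.1 j) ≤ r}ᶜ ∪
            {ω | ω.2 s(i0, j) = false}) ∩
          ({ω : (Fin n → Pt) × (Sym2 (Fin n) → Bool) | dist (ω.1 i1) (ω.1 j) ≤ r}ᶜ ∪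
            {ω | ω.2 s(i1, j) = false}) := by
        ext ω
        simp only [Set.mem_setOf_eq, Set.mem_inter_iff, Set.mem_union, Set.mem_compl_iff]
        constructor
        · intro h
          obtain ⟨h1, h2⟩ := h hj
          constructor
          · by_cases hd : dist (ω.1 i0) (ω.1 j) ≤ r
            · exact Or.inr (h1 hd)
            · exact Or.inl hd
          · by_cases hd : dist (ω.1 i1) (ω.1 j) ≤ r
            · exact Or.inr (h2 hd)
            · exact Or.inl hd
        · rintro ⟨h1, h2⟩ -
          exact ⟨fun hd => h1.resolve_left (not_not.2 hd), fun hd => h2.resolve_left (not_not.2 hd)⟩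
      rw [hrw]
      have hd0 : Measurable fun ω : (Fin n → Pt) × (Sym2 (Fin n) → Bool) =>
          dist (ω.1 i0) (ω.1 j) :=
        Measurable.dist measurable_fst.eval measurable_fst.eval
      have hd1 : Measurable fun ω : (Fin n → Pt) × (Sym2 (Fin n) → Bool) =>
          dist (ω.1 i1) (ω.1 j) :=
        Measurable.dist measurable_fst.eval measurable_fst.eval
      have hmb0 : Measurable fun ω : (Fin n → Pt) × (Sym2 (Fin n) → Bool) =>
          ω.2 s(i0, j) := measurable_snd.eval
      have hb0 : MeasurableSet {ω : (Fin n → Pt) × (Sym2 (Fin n) → Bool) |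
          ω.2 s(i0, j) = false} := hmb0 (measurableSet_singleton false)
      have hmb1 : Measurable fun ω : (Fin n → Pt) × (Sym2 (Fin n) → Bool) =>
          ω.2 s(i1, j) := measurable_snd.eval
      have hb1 : MeasurableSet {ω : (Fin n → Pt) × (Sym2 (Fin n) → Bool) |
          ω.2 s(i1, j) = false} := hmb1 (measurableSet_singleton false)
      exact (((measurableSet_le hd0 measurable_const).compl.union hb0).inter
        ((measurableSet_le hd1 measurable_const).compl.union hb1))
  rw [Measure.prod_apply hE'meas]
  have hpre : ∀ x : Fin n → Pt, (Prod.mk x ⁻¹' E') =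
      {b : Sym2 (Fin n) → Bool | ∀ j : Fin n, ¬ (j : ℕ) < 2 →
        (dist (x i0) (x j) ≤ r → b s(i0, j) = false) ∧
        (dist (x i1) (x j) ≤ r → b s(i1, j) = false)} := fun x => rfl
  calc ∫⁻ x, (Measure.pi fun _ : Sym2 (Fin n) => bern p) (Prod.mk x ⁻¹' E')
        ∂(Measure.pi fun _ : Fin n => volume.restrict S0)
      = ∫⁻ x, ∏ j ∈ Finset.univ.filter (fun j : Fin n => ¬ (j : ℕ) < 2),
          (qf r p (x i0) (x j) * qf r p (x i1) (x j))
          ∂(Measure.pi fun _ : Fin n => μ0) := by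
        refine lintegral_congr fun x => ?_
        rw [hpre x]
        exact bern_side n r p hn hp0 hp1 x
    _ = ∫⁻ X, ∫⁻ Y, (Gfun r p X Y) ^ (n - 2) ∂μ0 ∂μ0 := position_side n r p hn

end Main

end TwoIso

/-- Step in the proof of Theorem 9: the probability that nodes `v₁` and `v₂` are both
isolated in `g(n, r, p)` is at most the stated double integral. -/
theorem two_isolated_nodes_probability_upper_bound
    (n : ℕ) (hn : 2 ≤ n) (r : ℝ) (hr : 0 < r) (p : ℝ) (hp : p ∈ Set.Ioc (0:ℝ) 1) :
    (μgraph n p {ω |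
        (∀ j : Fin n, j ≠ ⟨0, by omega⟩ → ¬ adj n r ω ⟨0, by omega⟩ j) ∧
        (∀ j : Fin n, j ≠ ⟨1, by omega⟩ → ¬ adj n r ω ⟨1, by omega⟩ j)}).toReal ≤
      ∫ X in S0, ∫ Y in S0,
        (1 - nu (closedBall X r) * p - nu (closedBall Y r) * p +
          nu (closedBall X r ∩ closedBall Y r) * p ^ 2) ^ (n - 2) := by
  classical
  obtain ⟨hp0, hp1⟩ := hp
  have hp0' : (0:ℝ) ≤ p := le_of_lt hp0
  have hμ0 : TwoIso.μ0 = volume.restrict S0 := rfl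
  set E' : Set ((Fin n → Pt) × (Sym2 (Fin n) → Bool)) :=
    {ω | ∀ j : Fin n, ¬ (j : ℕ) < 2 →
      (dist (ω.1 ⟨0, by omega⟩) (ω.1 j) ≤ r → ω.2 s(⟨0, by omega⟩, j) = false) ∧
      (dist (ω.1 ⟨1, by omega⟩) (ω.1 j) ≤ r → ω.2 s(⟨1, by omega⟩, j) = false)} with hE'
  have hsub : {ω : (Fin n → Pt) × (Sym2 (Fin n) → Bool) |
      (∀ j : Fin n, j ≠ ⟨0, by omega⟩ → ¬ adj n r ω ⟨0, by omega⟩ j) ∧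
      (∀ j : Fin n, j ≠ ⟨1, by omega⟩ → ¬ adj n r ω ⟨1, by omega⟩ j)} ⊆ E' := by
    intro ω hω
    obtain ⟨h0, h1⟩ := hω
    simp only [hE', Set.mem_setOf_eq]
    intro j hj
    have hj0 : j ≠ (⟨0, by omega⟩ : Fin n) := by
      intro h; rw [h] at hj; exact hj (by simp)
    have hj1 : j ≠ (⟨1, by omega⟩ : Fin n) := by
      intro h; rw [h] at hj; exact hj (by simp)
    constructor
    · intro hd
      by_contra hb
      have hb' : ω.2 s(⟨0, by omega⟩, j) = true := by
        cases h' : ω.2 s(⟨0, by omega⟩, j) with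
        | false => exact absurd h' hb
        | true => rfl
      exact h0 j hj0 ⟨Ne.symm hj0, hd, hb'⟩
    · intro hd
      by_contra hb
      have hb' : ω.2 s(⟨1, by omega⟩, j) = true := by
        cases h' : ω.2 s(⟨1, by omega⟩, j) with
        | false => exact absurd h' hb
        | true => rfl
      exact h1 j hj1 ⟨Ne.symm hj1, hd, hb'⟩
  have hμE' : μgraph n p E' = ∫⁻ X, ∫⁻ Y, (TwoIso.Gfun r p X Y) ^ (n - 2)
      ∂TwoIso.μ0 ∂TwoIso.μ0 :=
    TwoIso.measure_Eaux n r p hn hp0' hp1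
  have htop : ∀ X : Pt, ∫⁻ Y, (TwoIso.Gfun r p X Y) ^ (n - 2) ∂TwoIso.μ0 ≤ 1 := by
    intro X
    calc ∫⁻ Y, (TwoIso.Gfun r p X Y) ^ (n - 2) ∂TwoIso.μ0
        ≤ ∫⁻ _, 1 ∂TwoIso.μ0 :=
          lintegral_mono fun Y => pow_le_one' (TwoIso.Gfun_le_one r p hp0' X Y) _
      _ = 1 := by simp
  have htop2 : ∫⁻ X, ∫⁻ Y, (TwoIso.Gfun r p X Y) ^ (n - 2) ∂TwoIso.μ0 ∂TwoIso.μ0 ≤ 1 := by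
    calc ∫⁻ X, ∫⁻ Y, (TwoIso.Gfun r p X Y) ^ (n - 2) ∂TwoIso.μ0 ∂TwoIso.μ0
        ≤ ∫⁻ _, 1 ∂TwoIso.μ0 := lintegral_mono fun X => htop X
      _ = 1 := by simp
  have hE'ne : μgraph n p E' ≠ ⊤ := by
    rw [hμE']
    exact (lt_of_le_of_lt htop2 ENNReal.one_lt_top).ne
  have hgnn : ∀ X Y : Pt, 0 ≤ 1 - nu (closedBall X r) * p - nu (closedBall Y r) * p +
      nu (closedBall X r ∩ closedBall Y r) * p ^ 2 := fun X Y =>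
    TwoIso.g_nonneg r p hp0' hp1 X Y
  have hinner : ∀ X : Pt, (∫ Y in S0,
      (1 - nu (closedBall X r) * p - nu (closedBall Y r) * p +
        nu (closedBall X r ∩ closedBall Y r) * p ^ 2) ^ (n - 2)) =
      (∫⁻ Y, (TwoIso.Gfun r p X Y) ^ (n - 2) ∂TwoIso.μ0).toReal := by
    intro X
    have hfeq : (fun Y : Pt => (1 - nu (closedBall X r) * p - nu (closedBall Y r) * p +
        nu (closedBall X r ∩ closedBall Y r) * p ^ 2) ^ (n - 2)) =
        fun Y : Pt => ((TwoIso.Gfun r p X Y).toReal) ^ (n - 2) :=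
      funext fun Y => by rw [TwoIso.Gfun_toReal r p hp0' hp1 X Y]
    have hGm : Measurable fun Y : Pt => TwoIso.Gfun r p X Y :=
      TwoIso.measurable_comp_pair (TwoIso.measurable_Gfun r p) measurable_const measurable_id
    have hmeas : AEStronglyMeasurable (fun Y : Pt =>
        (1 - nu (closedBall X r) * p - nu (closedBall Y r) * p +
          nu (closedBall X r ∩ closedBall Y r) * p ^ 2) ^ (n - 2)) (volume.restrict S0) := by
      rw [hfeq]
      exact ((ENNReal.measurable_toReal.comp hGm).pow_const _).aestronglyMeasurable
    rw [integral_eq_lintegral_of_nonneg_ae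
      (Filter.Eventually.of_forall fun Y => pow_nonneg (hgnn X Y) _) hmeas]
    rw [← hμ0]
    congr 1
    refine lintegral_congr fun Y => ?_
    rw [ENNReal.ofReal_pow (hgnn X Y), ← TwoIso.Gfun_eq r p hp0' hp1 X Y]
  have houter : (∫ X in S0, ∫ Y in S0,
      (1 - nu (closedBall X r) * p - nu (closedBall Y r) * p +
        nu (closedBall X r ∩ closedBall Y r) * p ^ 2) ^ (n - 2)) =
      (∫⁻ X, ∫⁻ Y, (TwoIso.Gfun r p X Y) ^ (n - 2) ∂TwoIso.μ0 ∂TwoIso.μ0).toReal := by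
    have hm2 : Measurable fun X : Pt => ∫⁻ Y, (TwoIso.Gfun r p X Y) ^ (n - 2) ∂TwoIso.μ0 :=
      Measurable.lintegral_prod_right' ((TwoIso.measurable_Gfun r p).pow_const _)
    have hfeq2 : (fun X : Pt => ∫ Y in S0,
        (1 - nu (closedBall X r) * p - nu (closedBall Y r) * p +
          nu (closedBall X r ∩ closedBall Y r) * p ^ 2) ^ (n - 2)) =
        fun X : Pt => (∫⁻ Y, (TwoIso.Gfun r p X Y) ^ (n - 2) ∂TwoIso.μ0).toReal :=
      funext hinner
    have hmeas2 : AEStronglyMeasurable (fun X : Pt => ∫ Y in S0,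
        (1 - nu (closedBall X r) * p - nu (closedBall Y r) * p +
          nu (closedBall X r ∩ closedBall Y r) * p ^ 2) ^ (n - 2)) (volume.restrict S0) := by
      rw [hfeq2]
      exact (ENNReal.measurable_toReal.comp hm2).aestronglyMeasurable
    have hnn2 : 0 ≤ᵐ[volume.restrict S0] fun X : Pt => ∫ Y in S0,
        (1 - nu (closedBall X r) * p - nu (closedBall Y r) * p +
          nu (closedBall X r ∩ closedBall Y r) * p ^ 2) ^ (n - 2) :=
      Filter.Eventually.of_forall fun X => integral_nonneg fun Y => pow_nonneg (hgnn X Y) _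
    rw [integral_eq_lintegral_of_nonneg_ae hnn2 hmeas2]
    congr 1
    rw [← hμ0]
    refine lintegral_congr fun X => ?_
    rw [hμ0, hinner X, ENNReal.ofReal_toReal (lt_of_le_of_lt (htop X) ENNReal.one_lt_top).ne,
      hμ0]
  calc (μgraph n p {ω : (Fin n → Pt) × (Sym2 (Fin n) → Bool) |
        (∀ j : Fin n, j ≠ ⟨0, by omega⟩ → ¬ adj n r ω ⟨0, by omega⟩ j) ∧
        (∀ j : Fin n, j ≠ ⟨1, by omega⟩ → ¬ adj n r ω ⟨1, by omega⟩ j)}).toReal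
      ≤ (μgraph n p E').toReal := ENNReal.toReal_mono hE'ne (measure_mono hsub)
    _ = (∫⁻ X, ∫⁻ Y, (TwoIso.Gfun r p X Y) ^ (n - 2) ∂TwoIso.μ0 ∂TwoIso.μ0).toReal := by
        rw [hμE']
    _ = ∫ X in S0, ∫ Y in S0,
          (1 - nu (closedBall X r) * p - nu (closedBall Y r) * p +
            nu (closedBall X r ∩ closedBall Y r) * p ^ 2) ^ (n - 2) := houter.symm

end
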